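/- Let G be a group with a finite non-normal subgroup such that R(G) (the intersection of all finite non-normal subgroups) is a nontrivial cyclic p-group, and let q ≠ p be an odd prime. Then the set of q-elements of G forms an abelian normal q-subgroup of G. -/

import Mathlib

open Subgroup

lemma aux_semiconj {G : Type*} [Group G] {x y c : G} (h : x * y = c * (y * x))
    (hcx : Commute c x) : ∀ N : ℕ, x ^ N * y = c ^ N * (y * x ^ N) := by
  intro N
  induction N with
  | zero => simp
  | succ n ih =>
    have hcx' : x * c ^ n = c ^ n * x := ((hcx.pow_left n).symm).eq
    calc x ^ (n + 1) * y = x * (x ^ n * y) := by rw [pow_succ']; rw [mul_assoc]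
      _ = x * (c ^ n * (y * x ^ n)) := by rw [ih]
      _ = (x * c ^ n) * (y * x ^ n) := by rw [mul_assoc]
      _ = c ^ n * (x * (y * x ^ n)) := by rw [hcx', mul_assoc]
      _ = c ^ n * ((x * y) * x ^ n) := by rw [mul_assoc]
      _ = c ^ n * ((c * (y * x)) * x ^ n) := by rw [h]
      _ = (c ^ n * c) * (y * (x * x ^ n)) := by simp only [mul_assoc]
      _ = c ^ (n + 1) * (y * x ^ (n + 1)) := by rw [← pow_succ, ← pow_succ']

lemma aux_pow {G : Type*} [Group G] {u v d : G} (h : v * u = d * (u * v))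
    (hdu : Commute d u) (hdv : Commute d v) :
    ∀ N : ℕ, (u * v) ^ N = d ^ (N.choose 2) * (u ^ N * v ^ N) := by
  intro N
  induction N with
  | zero => simp
  | succ n ih =>
    have hv : v ^ n * u = d ^ n * (u * v ^ n) := aux_semiconj h hdv n
    have swap : ∀ w : G, u ^ n * (d ^ n * w) = d ^ n * (u ^ n * w) := by
      intro w
      rw [← mul_assoc, ← (hdu.pow_pow n n).eq, mul_assoc]
    have hchoose : n.choose 2 + n = (n + 1).choose 2 := by
      rw [Nat.choose_succ_succ, Nat.choose_one_right, Nat.add_comm]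
    calc (u * v) ^ (n + 1) = (u * v) ^ n * (u * v) := pow_succ _ _
      _ = (d ^ n.choose 2 * (u ^ n * v ^ n)) * (u * v) := by rw [ih]
      _ = d ^ n.choose 2 * (u ^ n * ((v ^ n * u) * v)) := by simp only [mul_assoc]
      _ = d ^ n.choose 2 * (u ^ n * ((d ^ n * (u * v ^ n)) * v)) := by rw [hv]
      _ = d ^ n.choose 2 * (u ^ n * (d ^ n * (u * (v ^ n * v)))) := by simp only [mul_assoc]
      _ = d ^ n.choose 2 * (d ^ n * (u ^ n * (u * (v ^ n * v)))) := by rw [swap]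
      _ = (d ^ n.choose 2 * d ^ n) * ((u ^ n * u) * (v ^ n * v)) := by simp only [mul_assoc]
      _ = d ^ (n + 1).choose 2 * (u ^ (n + 1) * v ^ (n + 1)) := by
          rw [← pow_add, hchoose, ← pow_succ, ← pow_succ]

lemma aux_tor {G : Type*} [Group G] {g z : G} {q r : ℕ} (hq : 0 < q)
    (hg : orderOf g = q ^ r) (hr : 1 ≤ r) (hz : z ∈ zpowers g) (hzq : z ^ q = 1) :
    ∃ j : ℕ, z = (g ^ (q ^ (r - 1))) ^ j := by
  have hfin : IsOfFinOrder g := by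
    rw [← orderOf_pos_iff, hg]; exact pow_pos hq r
  obtain ⟨k, hk⟩ := (Submonoid.mem_powers_iff _ _).mp
    (hfin.mem_powers_iff_mem_zpowers.mpr hz)
  have h1 : g ^ (k * q) = 1 := by rw [pow_mul, hk, hzq]
  have h2 : q ^ r ∣ k * q := hg ▸ orderOf_dvd_of_pow_eq_one h1
  have h3 : q ^ (r - 1) * q ∣ k * q := by
    rwa [← pow_succ, Nat.sub_add_cancel hr]
  have h4 : q ^ (r - 1) ∣ k := (Nat.mul_dvd_mul_iff_right hq).mp h3
  exact ⟨k / q ^ (r - 1), by rw [← pow_mul, Nat.mul_div_cancel' h4, hk]⟩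

lemma aux_comm {G : Type*} [Group G] {q : ℕ} (hq : q.Prime) (hodd : Odd q)
    (hnorm : ∀ g : G, (∃ r : ℕ, orderOf g = q ^ r) → (zpowers g).Normal) :
    ∀ (M m n : ℕ) (x y : G), m + n ≤ M → n ≤ m → orderOf x = q ^ m →
      orderOf y = q ^ n → Commute x y := by
  intro M
  induction M using Nat.strong_induction_on with
  | _ M IH =>
  intro m n x y hM hnm hx hy
  have IH' : ∀ m' n' (x' y' : G), m' + n' < M → orderOf x' = q ^ m' →
      orderOf y' = q ^ n' → Commute x' y' := by
    intro m' n' x' y' hlt hx' hy'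
    rcases le_total n' m' with h' | h'
    · exact IH _ hlt m' n' x' y' le_rfl h' hx' hy'
    · exact (IH _ (by omega) n' m' y' x' le_rfl h' hy' hx').symm
  rcases Nat.eq_zero_or_pos n with hn0 | hn1
  · have hy1 : y = 1 := by rwa [hn0, pow_zero, orderOf_eq_one_iff] at hy
    rw [hy1]; exact Commute.one_right x
  have hm1 : 1 ≤ m := le_trans hn1 hnm
  have hq0 : 0 < q := hq.pos
  have hNx : (zpowers x).Normal := hnorm x ⟨m, hx⟩
  have hNy : (zpowers y).Normal := hnorm y ⟨n, hy⟩
  set c := x * y * x⁻¹ * y⁻¹ with hcdef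
  have hcx : c ∈ zpowers x := by
    have h1 : y * x⁻¹ * y⁻¹ ∈ zpowers x := hNx.conj_mem x⁻¹ (inv_mem (mem_zpowers x)) y
    have h2 := mul_mem (mem_zpowers x) h1
    rw [hcdef]
    simpa [mul_assoc] using h2
  have hcy : c ∈ zpowers y :=
    mul_mem (hNy.conj_mem y (mem_zpowers y) x) (inv_mem (mem_zpowers y))
  have hCxc : Commute x c := by
    obtain ⟨k, hk⟩ := mem_zpowers_iff.mp hcx
    exact hk ▸ (Commute.refl x).zpow_right k
  have hCyc : Commute y c := by
    obtain ⟨k, hk⟩ := mem_zpowers_iff.mp hcy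
    exact hk ▸ (Commute.refl y).zpow_right k
  have hbase : x * y = c * (y * x) := by rw [hcdef]; group
  -- c ^ q = 1
  have hcq1 : c ^ q = 1 := by
    have hmm : q * q ^ (m - 1) = q ^ m := by
      rw [← pow_succ']; congr 1; omega
    have hxq : (x ^ q) ^ (q ^ (m - 1)) = 1 := by
      rw [← pow_mul, hmm, ← hx, pow_orderOf_eq_one]
    obtain ⟨i, hile, hoi⟩ := (Nat.dvd_prime_pow hq).mp (orderOf_dvd_of_pow_eq_one hxq)
    have hcomq : Commute (x ^ q) y := IH' i n (x ^ q) y (by omega) hoi hy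
    have hs := aux_semiconj hbase hCxc.symm q
    rw [hcomq.eq] at hs
    exact mul_eq_right.mp hs.symm
  by_cases hc1 : c = 1
  · have : x * y = y * x := by rw [hbase, hc1, one_mul]
    exact this
  -- c ≠ 1
  obtain ⟨j, hj⟩ := aux_tor hq0 hy hn1 hcy hcq1
  set N := q ^ (n - 1) with hNdef
  set z := y ^ N with hzdef
  have hzq : z ^ q = 1 := by
    have hnn : N * q = q ^ n := by rw [hNdef, ← pow_succ]; congr 1; omega
    rw [hzdef, ← pow_mul, hnn, ← hy, pow_orderOf_eq_one]
  have hndvd : ¬ q ∣ j := by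
    rintro ⟨t, ht⟩
    exact hc1 (by rw [hj, ht, pow_mul, hzq, one_pow])
  have hcop : Nat.Coprime j q := (Nat.coprime_comm).mp ((Nat.Prime.coprime_iff_not_dvd hq).mpr hndvd)
  -- z is a power of c
  have hzc : z = c ^ (Nat.gcdA j q) := by
    have hbez : (1 : ℤ) = j * Nat.gcdA j q + q * Nat.gcdB j q := by
      have := Nat.gcd_eq_gcd_ab j q
      rwa [hcop, Nat.cast_one] at this
    calc z = z ^ ((j : ℤ) * Nat.gcdA j q + (q : ℤ) * Nat.gcdB j q) := by
            rw [← hbez, zpow_one]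
      _ = (z ^ (j : ℤ)) ^ Nat.gcdA j q * (z ^ (q : ℤ)) ^ Nat.gcdB j q := by
            rw [zpow_add, zpow_mul, zpow_mul]
      _ = c ^ (Nat.gcdA j q) := by
            rw [zpow_natCast, zpow_natCast, ← hj, hzq, one_zpow, mul_one]
  have hzx : z ∈ zpowers x := by
    rw [hzc]; exact zpow_mem hcx _
  rcases eq_or_lt_of_le (show 1 ≤ n from hn1) with hn1' | hn2
  · -- n = 1 : y = z is a power of x
    have hyz : y = z := by rw [hzdef, hNdef, ← hn1']; simp
    obtain ⟨k, hk⟩ := mem_zpowers_iff.mp hzx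
    rw [hyz]
    exact (hk ▸ (Commute.refl x).zpow_right k).symm.symm
  -- n ≥ 2
  obtain ⟨j', hj'⟩ := aux_tor hq0 hx hm1 hzx hzq
  set E := q ^ (m - n) * j' with hEdef
  have hzE : z = (x ^ E) ^ N := by
    have harith : q ^ (m - 1) * j' = E * N := by
      rw [hEdef, hNdef, mul_right_comm, ← pow_add]
      congr 2
      omega
    rw [hj', ← pow_mul, ← pow_mul, harith]
  -- inverse semiconjugation
  have hsc : x ^ E * y = c ^ E * (y * x ^ E) := aux_semiconj hbase hCxc.symm E
  have hd0a : Commute (c ^ E) (x ^ E) := (hCxc.symm).pow_pow E E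
  have key : y * (x ^ E)⁻¹ = c ^ E * ((x ^ E)⁻¹ * y) := by
    have h0 : x ^ E * (y * (x ^ E)⁻¹) = c ^ E * y := by
      rw [← mul_assoc, hsc]; simp [mul_assoc]
    calc y * (x ^ E)⁻¹ = (x ^ E)⁻¹ * (x ^ E * (y * (x ^ E)⁻¹)) := by
          rw [← mul_assoc, inv_mul_cancel, one_mul]
      _ = (x ^ E)⁻¹ * (c ^ E * y) := by rw [h0]
      _ = c ^ E * ((x ^ E)⁻¹ * y) := by
          rw [← mul_assoc, ← (hd0a.inv_right).eq, mul_assoc]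
  have inv_sc : (x ^ E)⁻¹ * y = (c ^ E)⁻¹ * (y * (x ^ E)⁻¹) := by
    rw [key, ← mul_assoc, inv_mul_cancel, one_mul]
  have hdu : Commute ((c ^ E)⁻¹) y := ((hCyc.symm).pow_left E).inv_left
  have hdv : Commute ((c ^ E)⁻¹) ((x ^ E)⁻¹) := (hd0a.inv_left).inv_right
  -- q divides N.choose 2
  have hqN2 : q ∣ N.choose 2 := by
    have hNodd : Odd N := hodd.pow
    have h2d : 2 ∣ N - 1 := (Nat.Odd.sub_odd hNodd odd_one).two_dvd
    have hch : N.choose 2 = N * ((N - 1) / 2) := by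
      rw [Nat.choose_two_right, Nat.mul_div_assoc _ h2d]
    rw [hch, hNdef]
    exact Dvd.dvd.mul_right (dvd_pow_self q (by omega)) _
  -- the modified element has smaller order
  have hyN : (y * (x ^ E)⁻¹) ^ N = 1 := by
    rw [aux_pow inv_sc hdu hdv N]
    have h5 : y ^ N = z := hzdef.symm
    have h6 : ((x ^ E)⁻¹) ^ N = z⁻¹ := by rw [inv_pow, ← hzE]
    have h7 : (((c ^ E)⁻¹ : G)) ^ (N.choose 2) = 1 := by
      obtain ⟨t, ht⟩ := hqN2
      rw [ht, pow_mul, inv_pow, ← pow_mul, mul_comm E q, pow_mul, hcq1, one_pow,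
        inv_one, one_pow]
    rw [h5, h6, h7]
    simp
  have hdvd : orderOf (y * (x ^ E)⁻¹) ∣ q ^ (n - 1) := by
    have h10 := orderOf_dvd_of_pow_eq_one hyN
    rwa [hNdef] at h10
  obtain ⟨n', hn'le, hn'⟩ := (Nat.dvd_prime_pow hq).mp hdvd
  have hcomm' : Commute x (y * (x ^ E)⁻¹) := IH' m n' x _ (by omega) hx hn'
  have h8 : Commute x (x ^ E) := (Commute.refl x).pow_right E
  have h9 : Commute x (y * (x ^ E)⁻¹ * x ^ E) := hcomm'.mul_right h8
  simpa [inv_mul_cancel_right] using h9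

/-- Suppose `R(G)`, the intersection of all finite non-normal subgroups of `G`, is
a nontrivial cyclic `p`-group, and let `q ≠ p` be an odd prime. Then the
`q`-elements of `G` form an abelian normal `q`-subgroup of `G`. -/
theorem stmt_10 (G : Type*) [Group G] {p q : ℕ} (hp : p.Prime) (hq : q.Prime)
    (hodd : Odd q) (hqp : q ≠ p)
    (S : Set (Subgroup G)) (hS : S = {H : Subgroup G | (H : Set G).Finite ∧ ¬ H.Normal})
    (hne : S.Nonempty) (hR : sInf S ≠ ⊥)
    (hcyc : IsCyclic (sInf S : Subgroup G)) (hPG : IsPGroup p (sInf S : Subgroup G)) :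
    ∃ T : Subgroup G, (T : Set G) = {g : G | ∃ n : ℕ, orderOf g = q ^ n} ∧
      T.Normal ∧ IsPGroup q T ∧ ∀ x ∈ T, ∀ y ∈ T, x * y = y * x := by
  -- Step 1: every cyclic subgroup generated by a q-element is normal
  have hnorm : ∀ g : G, (∃ r : ℕ, orderOf g = q ^ r) → (zpowers g).Normal := by
    rintro g ⟨r, hg⟩
    by_contra hnn
    have hfin : (zpowers g : Set G).Finite := by
      have : IsOfFinOrder g := by
        rw [← orderOf_pos_iff, hg]; exact pow_pos hq.pos r
      exact this.finite_zpowers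
    have hmem : zpowers g ∈ S := by rw [hS]; exact ⟨hfin, hnn⟩
    have hle : sInf S ≤ zpowers g := sInf_le hmem
    obtain ⟨⟨a, haS⟩, ha1⟩ := Subgroup.ne_bot_iff_exists_ne_one.mp hR
    have ha1' : a ≠ 1 := by simpa [Subtype.ext_iff] using ha1
    have hag : a ∈ zpowers g := hle haS
    -- order of a divides q ^ r
    have haq : a ^ q ^ r = 1 := by
      obtain ⟨k, hk⟩ := mem_zpowers_iff.mp hag
      rw [← hk, ← zpow_natCast, ← zpow_mul, mul_comm, zpow_mul, zpow_natCast, ← hg,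
        pow_orderOf_eq_one, one_zpow]
    obtain ⟨i, hile, hoi⟩ := (Nat.dvd_prime_pow hq).mp (orderOf_dvd_of_pow_eq_one haq)
    -- order of a divides a power of p
    obtain ⟨k, hk⟩ := hPG ⟨a, haS⟩
    have hap : a ^ p ^ k = 1 := by
      have := congrArg (Subgroup.subtype (sInf S)) hk
      simpa using this
    obtain ⟨l, hlle, hol⟩ := (Nat.dvd_prime_pow hp).mp (orderOf_dvd_of_pow_eq_one hap)
    have hne1 : orderOf a ≠ 1 := fun h => ha1' (orderOf_eq_one_iff.mp h)
    have hi1 : 1 ≤ i := by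
      rcases Nat.eq_zero_or_pos i with h | h
      · exfalso; apply hne1; rw [hoi, h, pow_zero]
      · exact h
    have hl1 : 1 ≤ l := by
      rcases Nat.eq_zero_or_pos l with h | h
      · exfalso; apply hne1; rw [hol, h, pow_zero]
      · exact h
    have hqp' : q ∣ p ^ l := by
      rw [← hol, hoi]
      exact dvd_pow_self q (by omega)
    exact hqp ((Nat.prime_dvd_prime_iff_eq hq hp).mp (hq.dvd_of_dvd_pow hqp'))
  -- Step 2: q-elements pairwise commute
  have habel : ∀ x y : G, (∃ m : ℕ, orderOf x = q ^ m) → (∃ n : ℕ, orderOf y = q ^ n) →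
      Commute x y := by
    rintro x y ⟨m, hm⟩ ⟨n, hn⟩
    rcases le_total n m with h | h
    · exact aux_comm hq hodd hnorm (m + n) m n x y le_rfl h hm hn
    · exact (aux_comm hq hodd hnorm (n + m) n m y x le_rfl h hn hm).symm
  -- Step 3: assemble the subgroup
  refine ⟨{ carrier := {g : G | ∃ n : ℕ, orderOf g = q ^ n}
            one_mem' := ⟨0, by simp⟩
            inv_mem' := by
              rintro a ⟨n, hn⟩
              exact ⟨n, by rwa [orderOf_inv]⟩
            mul_mem' := by
              rintro a b ⟨ma, hma⟩ ⟨mb, hmb⟩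
              have hcomm : Commute a b := habel a b ⟨ma, hma⟩ ⟨mb, hmb⟩
              have hdvd : orderOf (a * b) ∣ q ^ (ma + mb) := by
                calc orderOf (a * b) ∣ orderOf a * orderOf b :=
                      hcomm.orderOf_mul_dvd_mul_orderOf
                  _ = q ^ (ma + mb) := by rw [hma, hmb, pow_add]
              obtain ⟨i, _, hi⟩ := (Nat.dvd_prime_pow hq).mp hdvd
              exact ⟨i, hi⟩ }, rfl, ?_, ?_, ?_⟩
  · constructor
    rintro a ⟨na, hna⟩ g
    refine ⟨na, ?_⟩
    have : orderOf (g * a * g⁻¹) = orderOf a := by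
      have := orderOf_injective (MulAut.conj g).toMonoidHom
        (MulEquiv.injective (MulAut.conj g)) a
      simpa [MulAut.conj_apply] using this
    rw [this, hna]
  · rintro ⟨g, ng, hng⟩
    refine ⟨ng, ?_⟩
    ext
    simp only [SubmonoidClass.coe_pow, OneMemClass.coe_one]
    rw [← hng, pow_orderOf_eq_one]
  · rintro a ⟨na, hna⟩ b ⟨nb, hnb⟩
    exact habel a b ⟨na, hna⟩ ⟨nb, hnb⟩
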